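/- Let C₁ and C₂ be (N−1)×N real matrices partitioned as C₁ = [C̄₁ bᵀ] and C₂ = [C̄₂ gᵀ], where C̄₁, C̄₂ are the (N−1)×(N−1) submatrices formed by the first N−1 columns and bᵀ, gᵀ ∈ ℝ^{N−1} are the last columns (b, g being row vectors). Assume C̄₁ and C̄₂ are invertible and that the scalar 1 + g C̄₂⁻ᵀ C̄₁⁻¹ bᵀ is nonzero, and set γ = (1 + g C̄₂⁻ᵀ C̄₁⁻¹ bᵀ)⁻¹. Then C₁C₂ᵀ = C̄₁C̄₂ᵀ + bᵀg is invertible and I − C₂ᵀ(C₁ C₂ᵀ)⁻¹ C₁ = γ · u vᵀ, where u ∈ ℝᴺ is the column vector with first N−1 entries C̄₁⁻¹bᵀ and last entry −1, and vᵀ is the row vector with first N−1 entries g C̄₂⁻ᵀ and last entry −1. In particular this matrix has rank one. -/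

import Mathlib

open Matrix

variable {l m n : Type*} [Fintype m]

lemma my_mul_vecMulVec (A : Matrix l m ℝ) (x : m → ℝ) (y : n → ℝ) :
    A * vecMulVec x y = vecMulVec (A *ᵥ x) y := by
  ext i j
  simp [mul_apply, vecMulVec_apply, mulVec, dotProduct, Finset.sum_mul, mul_assoc]

lemma my_vecMulVec_mul (x : l → ℝ) (y : m → ℝ) (A : Matrix m n ℝ) :
    vecMulVec x y * A = vecMulVec x (y ᵥ* A) := by
  ext i j
  simp [mul_apply, vecMulVec_apply, vecMul, dotProduct, Finset.mul_sum, mul_assoc]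

lemma my_vecMulVec_mul_vecMulVec (x : l → ℝ) (y z : m → ℝ) (w : n → ℝ) :
    vecMulVec x y * vecMulVec z w = (y ⬝ᵥ z) • vecMulVec x w := by
  ext i j
  simp [mul_apply, vecMulVec_apply, dotProduct, Finset.sum_mul, Finset.mul_sum]
  ring_nf
  apply Finset.sum_congr rfl
  intros; ring

lemma my_vecMul_vecMulVec (y : m → ℝ) (x : m → ℝ) (z : n → ℝ) :
    y ᵥ* vecMulVec x z = (y ⬝ᵥ x) • z := by
  ext j
  simp [vecMul, vecMulVec_apply, dotProduct, Finset.sum_mul, mul_assoc]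

lemma my_vecMulVec_mulVec (x : l → ℝ) (y : m → ℝ) (z : m → ℝ) :
    vecMulVec x y *ᵥ z = (y ⬝ᵥ z) • x := by
  ext i
  simp [mulVec, vecMulVec_apply, dotProduct, Finset.mul_sum, mul_assoc, mul_comm]
  apply Finset.sum_congr rfl
  intros; ring

lemma my_smul_vecMulVec (c : ℝ) (x : l → ℝ) (y : n → ℝ) :
    c • vecMulVec x y = vecMulVec (c • x) y := by
  ext i j
  simp [vecMulVec_apply, mul_assoc]

lemma my_vecMulVec_smul (x : l → ℝ) (c : ℝ) (y : n → ℝ) :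
    vecMulVec x (c • y) = c • vecMulVec x y := by
  ext i j
  simp [vecMulVec_apply]
  ring

lemma my_vecMulVec_smul_left (c : ℝ) (x : l → ℝ) (y : n → ℝ) :
    vecMulVec (c • x) y = c • vecMulVec x y := by
  ext i j
  simp [vecMulVec_apply]
  ring

lemma my_zero_vecMulVec (y : n → ℝ) :
    vecMulVec (0 : l → ℝ) y = 0 := by
  ext i j; simp [vecMulVec_apply]

/-- rank-one form of the oblique projection
`I − C₂ᵀ(C₁C₂ᵀ)⁻¹C₁` for partitioned (N−1)×N matrices
C₁ = [C̄₁ bᵀ], C₂ = [C̄₂ gᵀ]. -/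
theorem stmt2 {n : ℕ} (C₁ C₂ : Matrix (Fin n) (Fin (n + 1)) ℝ)
    (Cb₁ Cb₂ : Matrix (Fin n) (Fin n) ℝ) (b g : Fin n → ℝ)
    (hpart1 : ∀ (i : Fin n) (j : Fin n), C₁ i (Fin.castSucc j) = Cb₁ i j)
    (hlast1 : ∀ i : Fin n, C₁ i (Fin.last n) = b i)
    (hpart2 : ∀ (i : Fin n) (j : Fin n), C₂ i (Fin.castSucc j) = Cb₂ i j)
    (hlast2 : ∀ i : Fin n, C₂ i (Fin.last n) = g i)
    (hCb₁ : IsUnit Cb₁) (hCb₂ : IsUnit Cb₂)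
    (hden : 1 + g ⬝ᵥ ((Cb₂⁻¹)ᵀ *ᵥ (Cb₁⁻¹ *ᵥ b)) ≠ 0)
    (γ : ℝ) (hγ : γ = (1 + g ⬝ᵥ ((Cb₂⁻¹)ᵀ *ᵥ (Cb₁⁻¹ *ᵥ b)))⁻¹)
    (u v : Fin (n + 1) → ℝ)
    (hu : u = Fin.snoc (Cb₁⁻¹ *ᵥ b) (-1))
    (hv : v = Fin.snoc (g ᵥ* (Cb₂⁻¹)ᵀ) (-1)) :
    C₁ * C₂ᵀ = Cb₁ * Cb₂ᵀ + vecMulVec b g ∧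
    IsUnit (C₁ * C₂ᵀ) ∧
    (1 : Matrix (Fin (n + 1)) (Fin (n + 1)) ℝ) - C₂ᵀ * (C₁ * C₂ᵀ)⁻¹ * C₁
      = γ • vecMulVec u v ∧
    ((1 : Matrix (Fin (n + 1)) (Fin (n + 1)) ℝ) - C₂ᵀ * (C₁ * C₂ᵀ)⁻¹ * C₁).rank = 1 := by
  -- basic determinant units
  have hd1 : IsUnit Cb₁.det := (Matrix.isUnit_iff_isUnit_det _).mp hCb₁
  have hd2 : IsUnit Cb₂.det := (Matrix.isUnit_iff_isUnit_det _).mp hCb₂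
  -- notation
  set s : ℝ := g ⬝ᵥ ((Cb₂⁻¹)ᵀ *ᵥ (Cb₁⁻¹ *ᵥ b)) with hs
  set p : Fin n → ℝ := Cb₁⁻¹ *ᵥ b with hp
  set w : Fin n → ℝ := g ᵥ* (Cb₂⁻¹)ᵀ with hw
  set A : Matrix (Fin n) (Fin n) ℝ := Cb₁ * Cb₂ᵀ with hA
  set B : Matrix (Fin n) (Fin n) ℝ := (Cb₂⁻¹)ᵀ * Cb₁⁻¹ with hB
  have hγs : γ * (1 + s) = 1 := by
    rw [hγ]; exact inv_mul_cancel₀ hden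
  -- A * B = 1 and B * A = 1
  have hCb2T : Cb₂ᵀ * (Cb₂⁻¹)ᵀ = 1 := by
    rw [← transpose_mul, Matrix.nonsing_inv_mul _ hd2, transpose_one]
  have hCb2T' : (Cb₂⁻¹)ᵀ * Cb₂ᵀ = 1 := by
    rw [← transpose_mul, Matrix.mul_nonsing_inv _ hd2, transpose_one]
  have hAB : A * B = 1 := by
    rw [hA, hB, mul_assoc, ← mul_assoc Cb₂ᵀ, hCb2T, one_mul,
      Matrix.mul_nonsing_inv _ hd1]
  have hBA : B * A = 1 := by
    rw [hA, hB, mul_assoc, ← mul_assoc Cb₁⁻¹, Matrix.nonsing_inv_mul _ hd1, one_mul, hCb2T']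
  -- vectors r and q
  set r : Fin n → ℝ := B *ᵥ b with hr
  set q : Fin n → ℝ := g ᵥ* B with hq
  have hrval : r = (Cb₂⁻¹)ᵀ *ᵥ (Cb₁⁻¹ *ᵥ b) := by rw [hr, hB, ← mulVec_mulVec]
  have hsr : g ⬝ᵥ r = s := by rw [hrval, hs]
  -- Sherman-Morrison candidate inverse
  set M : Matrix (Fin n) (Fin n) ℝ := A + vecMulVec b g with hM
  set N : Matrix (Fin n) (Fin n) ℝ := B - γ • vecMulVec r q with hN
  have hArb : A *ᵥ r = b := by rw [hr, mulVec_mulVec, hAB, one_mulVec]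
  have hqA : q ᵥ* A = g := by rw [hq, vecMul_vecMul, hBA, vecMul_one]
  have hqb : q ⬝ᵥ b = s := by
    rw [hq, ← dotProduct_mulVec, hsr]
  have hMN : M * N = 1 := by
    have expand : M * N = A * B - γ • vecMulVec (A *ᵥ r) q
        + (vecMulVec b (g ᵥ* B) - γ • ((g ⬝ᵥ r) • vecMulVec b q)) := by
      rw [hM, hN]
      simp only [add_mul, mul_sub, sub_mul, mul_add, add_mul, mul_smul_comm, smul_mul_assoc,
        my_mul_vecMulVec, my_vecMulVec_mul, my_vecMul_vecMulVec, my_vecMulVec_mulVec,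
        my_vecMulVec_smul, my_vecMulVec_smul_left, mulVec_smul, dotProduct_smul,
        smul_smul, smul_add, smul_sub]
      try simp only [← hq, ← hr]
      try module
    rw [expand, hAB, hArb, hsr, ← hq, smul_smul]
    have : vecMulVec b q - (γ * s) • vecMulVec b q = (1 - γ * s) • vecMulVec b q := by
      rw [sub_smul, one_smul]
    rw [this]
    have hz : (1 : ℝ) - γ * s = γ := by nlinarith [hγs]
    rw [hz, sub_add_cancel]
  have hNM : N * M = 1 := by
    have expand : N * M = B * A - γ • vecMulVec r (q ᵥ* A)
        + (vecMulVec (B *ᵥ b) g - γ • ((q ⬝ᵥ b) • vecMulVec r g)) := by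
      rw [hN, hM]
      simp only [add_mul, mul_sub, sub_mul, mul_add, mul_smul_comm, smul_mul_assoc,
        my_mul_vecMulVec, my_vecMulVec_mul, my_vecMul_vecMulVec, my_vecMulVec_mulVec,
        my_vecMulVec_smul, my_vecMulVec_smul_left, mulVec_smul, dotProduct_smul,
        smul_smul, smul_add, smul_sub]
      try simp only [← hq, ← hr]
      try module
    rw [expand, hBA, hqA, hqb, ← hr, smul_smul]
    have : vecMulVec r g - (γ * s) • vecMulVec r g = (1 - γ * s) • vecMulVec r g := by
      rw [sub_smul, one_smul]
    rw [this]
    have hz : (1 : ℝ) - γ * s = γ := by nlinarith [hγs]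
    rw [hz, sub_add_cancel]
  -- part 1 : C₁ * C₂ᵀ = M
  have hpartEq : C₁ * C₂ᵀ = M := by
    ext i k
    rw [hM, hA]
    simp only [mul_apply, transpose_apply, Matrix.add_apply, vecMulVec_apply]
    rw [Fin.sum_univ_castSucc]
    simp [hpart1, hlast1, hpart2, hlast2]
  have hUnit : IsUnit (C₁ * C₂ᵀ) := by
    rw [hpartEq]
    have := invertibleOfRightInverse M N hMN
    exact isUnit_of_invertible M
  have hinv : (C₁ * C₂ᵀ)⁻¹ = N := by
    rw [hpartEq]; exact Matrix.inv_eq_right_inv hMN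
  -- key vector identities
  have hC1u : C₁ *ᵥ u = 0 := by
    funext i
    rw [hu]
    simp only [mulVec, dotProduct]
    rw [Fin.sum_univ_castSucc]
    simp only [Fin.snoc_castSucc, Fin.snoc_last, hpart1, hlast1]
    have : ∑ j : Fin n, Cb₁ i j * p j = (Cb₁ *ᵥ p) i := rfl
    rw [this, hp, mulVec_mulVec, Matrix.mul_nonsing_inv _ hd1, one_mulVec]
    simp
  have hvC2 : v ᵥ* C₂ᵀ = 0 := by
    funext i
    rw [hv]
    simp only [vecMul, dotProduct, transpose_apply]
    rw [Fin.sum_univ_castSucc]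
    simp only [Fin.snoc_castSucc, Fin.snoc_last, hpart2, hlast2]
    have h1 : ∑ j : Fin n, w j * Cb₂ i j = (Cb₂ *ᵥ w) i := by
      simp [mulVec, dotProduct, mul_comm]
    have hwg : Cb₂ *ᵥ w = g := by
      rw [hw, vecMul_transpose, mulVec_mulVec, Matrix.mul_nonsing_inv _ hd2, one_mulVec]
    rw [h1, hwg]
    simp
  have hvu : v ⬝ᵥ u = 1 + s := by
    rw [hv, hu]
    simp only [dotProduct]
    rw [Fin.sum_univ_castSucc]
    simp only [Fin.snoc_castSucc, Fin.snoc_last]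
    have : ∑ j : Fin n, w j * p j = w ⬝ᵥ p := rfl
    rw [this, hw, hp, ← dotProduct_mulVec, ← hs]
    ring
  -- the projection
  set P : Matrix (Fin (n + 1)) (Fin (n + 1)) ℝ := 1 - C₂ᵀ * (C₁ * C₂ᵀ)⁻¹ * C₁ with hP
  set Q : Matrix (Fin (n + 1)) (Fin (n + 1)) ℝ := γ • vecMulVec u v with hQ
  have hC1P : C₁ * P = 0 := by
    rw [hP, Matrix.mul_sub, Matrix.mul_one, hinv, ← Matrix.mul_assoc, ← Matrix.mul_assoc,
      hpartEq, hMN, Matrix.one_mul, sub_self]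
  have hC1Q : C₁ * Q = 0 := by
    rw [hQ, Matrix.mul_smul, my_mul_vecMulVec, hC1u, my_zero_vecMulVec, smul_zero]
  have hvP : v ᵥ* P = v := by
    rw [hP, vecMul_sub, vecMul_one, hinv]
    rw [← vecMul_vecMul, ← vecMul_vecMul, hvC2, zero_vecMul, zero_vecMul, sub_zero]
  have hvQ : v ᵥ* Q = v := by
    rw [hQ, my_smul_vecMulVec, my_vecMul_vecMulVec]
    have : v ⬝ᵥ γ • u = γ * (1 + s) := by
      rw [dotProduct_smul, hvu]; simp [smul_eq_mul]
    rw [this, hγs, one_smul]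
  -- kernel lemma
  have kerL : ∀ x : Fin (n + 1) → ℝ, C₁ *ᵥ x = 0 → v ⬝ᵥ x = 0 → x = 0 := by
    intro x hx1 hx2
    set x' : Fin n → ℝ := fun j => x (Fin.castSucc j) with hx'
    set t : ℝ := x (Fin.last n) with ht
    have hCb1x : Cb₁ *ᵥ x' = (-t) • b := by
      funext i
      have := congrFun hx1 i
      simp only [mulVec, dotProduct, Pi.zero_apply] at this
      rw [Fin.sum_univ_castSucc] at this
      simp only [hpart1, hlast1] at this
      simp only [mulVec, dotProduct, Pi.smul_apply, smul_eq_mul, hx']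
      linarith [this]
    have hx'val : x' = (-t) • p := by
      have : Cb₁⁻¹ *ᵥ (Cb₁ *ᵥ x') = x' := by
        rw [mulVec_mulVec, Matrix.nonsing_inv_mul _ hd1, one_mulVec]
      rw [← this, hCb1x, mulVec_smul, hp]
    have hvx : v ⬝ᵥ x = -(t * (1 + s)) := by
      rw [hv]
      simp only [dotProduct]
      rw [Fin.sum_univ_castSucc]
      simp only [Fin.snoc_castSucc, Fin.snoc_last]
      have e1 : ∑ j : Fin n, w j * x (Fin.castSucc j) = w ⬝ᵥ x' := rfl
      rw [e1, hx'val, dotProduct_smul]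
      have e2 : w ⬝ᵥ p = s := by
        rw [hw, hp, ← dotProduct_mulVec, ← hs]
      rw [e2, ← ht]
      simp [smul_eq_mul]; ring
    have hts : t = 0 := by
      rw [hvx] at hx2
      have h1s : (1 : ℝ) + s ≠ 0 := hden
      have : t * (1 + s) = 0 := by linarith
      exact (mul_eq_zero.mp this).resolve_right h1s
    have hx'z : x' = 0 := by rw [hx'val, hts]; simp
    funext k
    refine Fin.lastCases ?_ ?_ k
    · simp only [Pi.zero_apply, ← ht, hts]
    · intro j
      have := congrFun hx'z j
      simpa [hx'] using this
  -- P = Q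
  have hPQ : P = Q := by
    have hsub : ∀ j, (fun k => (P - Q) k j) = 0 := by
      intro j
      apply kerL
      · funext i
        have : C₁ * (P - Q) = 0 := by rw [Matrix.mul_sub, hC1P, hC1Q, sub_self]
        have h2 := congrFun (congrFun this i) j
        simpa [mulVec, dotProduct, mul_apply] using h2
      · have : v ᵥ* (P - Q) = 0 := by rw [vecMul_sub, hvP, hvQ, sub_self]
        have h2 := congrFun this j
        simpa [vecMul, dotProduct] using h2
    ext i j
    have := congrFun (hsub j) i
    simpa [Matrix.sub_apply, sub_eq_zero] using this
  refine ⟨hpartEq, hUnit, hPQ, ?_⟩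
  -- rank
  have hrw : P = vecMulVec (γ • u) v := by
    rw [hPQ, hQ, my_smul_vecMulVec]
  rw [hrw]
  have hle : (vecMulVec (γ • u) v).rank ≤ 1 := by
    rw [vecMulVec_eq (Fin 1)]
    calc (replicateCol (Fin 1) (γ • u) * replicateRow (Fin 1) v).rank
        ≤ (replicateCol (Fin 1) (γ • u)).rank := rank_mul_le_left _ _
      _ ≤ Fintype.card (Fin 1) := rank_le_card_width _
      _ = 1 := by simp
  have hQu : vecMulVec (γ • u) v *ᵥ u = u := by
    rw [my_vecMulVec_mulVec, hvu, smul_smul]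
    have : (1 + s) * γ = 1 := by rw [mul_comm]; exact hγs
    rw [this, one_smul]
  have hune : u ≠ 0 := by
    intro h
    have := congrFun h (Fin.last n)
    rw [hu] at this
    simp at this
  have hge : 1 ≤ (vecMulVec (γ • u) v).rank := by
    rw [Matrix.rank]
    rw [Nat.one_le_iff_ne_zero]
    intro h0
    have : LinearMap.range (vecMulVec (γ • u) v).mulVecLin = ⊥ := by
      apply Submodule.finrank_eq_zero.mp h0
    have hmem : u ∈ LinearMap.range (vecMulVec (γ • u) v).mulVecLin :=
      ⟨u, hQu⟩
    rw [this] at hmem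
    exact hune (Submodule.mem_bot _ |>.mp hmem)
  omega
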